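/- Let Φ(y) = (2π)^{−1/2} ∫_{−∞}^{y} e^{−t²/2} dt be the standard normal distribution function, and let q : (0,1) → ℝ be any function satisfying Φ(q(s)) = 1 − s for all s ∈ (0,1). Then for every x > 0: lim_{s→0⁺} (2 log(1/s))^{1/2}·( q(s) − q(xs) ) = log x (the expression being taken for s small enough that xs ∈ (0,1)). -/

import Mathlib

open Filter Topology Set

noncomputable def Gtail (y : ℝ) : ℝ := ∫ t in Set.Ioi y, Real.exp (-t ^ 2 / 2)

lemma gauss_integrable : MeasureTheory.Integrable (fun t : ℝ => Real.exp (-t ^ 2 / 2)) := by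
  have := integrable_exp_neg_mul_sq (b := (1/2 : ℝ)) (by norm_num)
  convert this using 2 with t
  ring_nf

lemma gauss_total : ∫ t : ℝ, Real.exp (-t ^ 2 / 2) = Real.sqrt (2 * Real.pi) := by
  have := integral_gaussian (1/2 : ℝ)
  rw [show Real.pi / (1/2 : ℝ) = 2 * Real.pi by ring] at this
  rw [← this]
  congr 1 with t
  ring_nf

lemma Gtail_eq (y : ℝ) : Gtail y = Real.sqrt (2 * Real.pi) - ∫ t in Set.Iic y, Real.exp (-t ^ 2 / 2) := by
  have h := intervalIntegral.integral_Iic_add_Ioi (μ := MeasureTheory.volume) (b := y)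
    (f := fun t : ℝ => Real.exp (-t ^ 2 / 2)) gauss_integrable.integrableOn gauss_integrable.integrableOn
  rw [gauss_total] at h
  unfold Gtail
  linarith

lemma integral_t_exp (y : ℝ) : ∫ t in Set.Ioi y, t * Real.exp (-t ^ 2 / 2) = Real.exp (-y ^ 2 / 2) := by
  have hint : MeasureTheory.IntegrableOn (fun t : ℝ => t * Real.exp (-t ^ 2 / 2)) (Set.Ioi y) := by
    have := integrable_mul_exp_neg_mul_sq (b := (1/2 : ℝ)) (by norm_num)
    have h2 : (fun t : ℝ => t * Real.exp (-t ^ 2 / 2)) = fun t : ℝ => t * Real.exp (-(1/2) * t ^ 2) := by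
      funext t; ring_nf
    rw [h2]
    exact this.integrableOn
  have hderiv : ∀ t ∈ Set.Ici y, HasDerivAt (fun t : ℝ => -Real.exp (-t ^ 2 / 2))
      (t * Real.exp (-t ^ 2 / 2)) t := by
    intro t _
    have h : HasDerivAt (fun t : ℝ => -t ^ 2 / 2) (-t) t := by
      have := ((hasDerivAt_pow 2 t).neg).div_const 2
      simpa using this.congr_deriv (by push_cast; ring)
    have := (h.exp).neg
    exact this.congr_deriv (by ring)
  have htend : Tendsto (fun t : ℝ => -Real.exp (-t ^ 2 / 2)) atTop (𝓝 0) := by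
    rw [show (0:ℝ) = -0 by ring]
    apply Tendsto.neg
    apply Real.tendsto_exp_atBot.comp
    have : Tendsto (fun t : ℝ => t ^ 2 / 2) atTop atTop :=
      (tendsto_pow_atTop (by norm_num)).atTop_div_const (by norm_num)
    exact (tendsto_neg_atTop_atBot.comp this).congr (fun t => by simp [neg_div])
  have := MeasureTheory.integral_Ioi_of_hasDerivAt_of_tendsto' hderiv hint htend
  rw [this]; ring

lemma Gtail_upper {y : ℝ} (hy : 0 < y) : Gtail y ≤ Real.exp (-y ^ 2 / 2) / y := by
  have hint : MeasureTheory.IntegrableOn (fun t : ℝ => t * Real.exp (-t ^ 2 / 2)) (Set.Ioi y) := by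
    have := integrable_mul_exp_neg_mul_sq (b := (1/2 : ℝ)) (by norm_num)
    have h2 : (fun t : ℝ => t * Real.exp (-t ^ 2 / 2)) = fun t : ℝ => t * Real.exp (-(1/2) * t ^ 2) := by
      funext t; ring_nf
    rw [h2]; exact this.integrableOn
  have hmono : Gtail y ≤ ∫ t in Set.Ioi y, (t / y) * Real.exp (-t ^ 2 / 2) := by
    apply MeasureTheory.setIntegral_mono_on gauss_integrable.integrableOn
      (by simpa [div_mul_eq_mul_div, MeasureTheory.IntegrableOn] using hint.div_const y) measurableSet_Ioi
    intro t ht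
    have h1 : (1 : ℝ) ≤ t / y := (one_le_div hy).2 (le_of_lt ht)
    nlinarith [Real.exp_pos (-t ^ 2 / 2)]
  calc Gtail y ≤ ∫ t in Set.Ioi y, (t / y) * Real.exp (-t ^ 2 / 2) := hmono
    _ = (∫ t in Set.Ioi y, t * Real.exp (-t ^ 2 / 2)) / y := by
        rw [← MeasureTheory.integral_div]; congr 1 with t; ring
    _ = Real.exp (-y ^ 2 / 2) / y := by rw [integral_t_exp]

lemma Gtail_lower {y : ℝ} (hy : 0 < y) : Real.exp (-y ^ 2 / 2) * (y / (y ^ 2 + 1)) ≤ Gtail y := by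
  have hint2 : MeasureTheory.IntegrableOn (fun t : ℝ => Real.exp (-t ^ 2 / 2) / t ^ 2) (Set.Ioi y) := by
    apply MeasureTheory.Integrable.mono' (gauss_integrable.integrableOn.div_const (y ^ 2))
    · apply ContinuousOn.aestronglyMeasurable _ measurableSet_Ioi
      apply ContinuousOn.div (Real.continuous_exp.comp (by continuity)).continuousOn
        (continuous_pow 2).continuousOn
      intro t ht
      exact pow_ne_zero 2 (hy.trans ht).ne'
    · filter_upwards [MeasureTheory.ae_restrict_mem measurableSet_Ioi] with t ht
      have h1 : 0 < t := hy.trans ht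
      rw [Real.norm_eq_abs, abs_of_pos (by positivity)]
      gcongr <;> first | exact le_of_lt ht | nlinarith [Real.exp_pos (-t ^ 2 / 2)]
  have hderiv : ∀ t ∈ Set.Ici y, HasDerivAt (fun t : ℝ => -Real.exp (-t ^ 2 / 2) / t)
      (Real.exp (-t ^ 2 / 2) + Real.exp (-t ^ 2 / 2) / t ^ 2) t := by
    intro t ht
    have htpos : 0 < t := lt_of_lt_of_le hy ht
    have h : HasDerivAt (fun t : ℝ => -t ^ 2 / 2) (-t) t := by
      have := ((hasDerivAt_pow 2 t).neg).div_const 2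
      simpa using this.congr_deriv (by push_cast; ring)
    have hu : HasDerivAt (fun t : ℝ => -Real.exp (-t ^ 2 / 2)) (t * Real.exp (-t ^ 2 / 2)) t := by
      have := (h.exp).neg
      exact this.congr_deriv (by ring)
    have := hu.div (hasDerivAt_id t) htpos.ne'
    apply this.congr_deriv
    simp only [id]
    field_simp
    ring
  have hint3 : MeasureTheory.IntegrableOn
      (fun t : ℝ => Real.exp (-t ^ 2 / 2) + Real.exp (-t ^ 2 / 2) / t ^ 2) (Set.Ioi y) :=
    gauss_integrable.integrableOn.add hint2
  have htend : Tendsto (fun t : ℝ => -Real.exp (-t ^ 2 / 2) / t) atTop (𝓝 0) := by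
    have h1 : Tendsto (fun t : ℝ => -Real.exp (-t ^ 2 / 2)) atTop (𝓝 0) := by
      rw [show (0:ℝ) = -0 by ring]
      apply Tendsto.neg
      apply Real.tendsto_exp_atBot.comp
      have : Tendsto (fun t : ℝ => t ^ 2 / 2) atTop atTop :=
        (tendsto_pow_atTop (by norm_num)).atTop_div_const (by norm_num)
      exact (tendsto_neg_atTop_atBot.comp this).congr (fun t => by simp [neg_div])
    have := h1.mul tendsto_inv_atTop_zero
    simpa [div_eq_mul_inv, mul_zero] using this
  have hFTC := MeasureTheory.integral_Ioi_of_hasDerivAt_of_tendsto' hderiv hint3 htend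
  rw [MeasureTheory.integral_add gauss_integrable.integrableOn hint2] at hFTC
  have hle : (∫ t in Set.Ioi y, Real.exp (-t ^ 2 / 2) / t ^ 2) ≤ Gtail y / y ^ 2 := by
    have h2 : (∫ t in Set.Ioi y, Real.exp (-t ^ 2 / 2) / t ^ 2)
        ≤ ∫ t in Set.Ioi y, Real.exp (-t ^ 2 / 2) / y ^ 2 := by
      apply MeasureTheory.setIntegral_mono_on hint2
        (gauss_integrable.integrableOn.div_const _) measurableSet_Ioi
      intro t ht
      gcongr <;> first | exact le_of_lt ht | exact le_of_lt (Real.exp_pos _) | nlinarith [hy.trans ht]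
    rwa [MeasureTheory.integral_div] at h2
  have hG : Real.exp (-y ^ 2 / 2) / y ≤ Gtail y + Gtail y / y ^ 2 := by
    rw [show -Real.exp (-y ^ 2 / 2) / y = -(Real.exp (-y ^ 2 / 2) / y) by ring] at hFTC
    unfold Gtail at hle ⊢
    linarith
  have hy2 : (0:ℝ) < y ^ 2 := by positivity
  have key2 : Real.exp (-y ^ 2 / 2) * y ≤ Gtail y * (y ^ 2 + 1) := by
    have h := mul_le_mul_of_nonneg_right hG (le_of_lt hy2)
    rw [div_mul_eq_mul_div, add_mul, div_mul_cancel₀ _ hy2.ne'] at h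
    rw [show Real.exp (-y ^ 2 / 2) * y ^ 2 / y = Real.exp (-y ^ 2 / 2) * y by
      rw [pow_two]; field_simp] at h
    linarith
  have hy21 : (0:ℝ) < y ^ 2 + 1 := by positivity
  rw [mul_div_assoc', div_le_iff₀ hy21]
  linarith

lemma Gtail_pos (y : ℝ) : 0 < Gtail y := by
  rw [Gtail, MeasureTheory.setIntegral_pos_iff_support_of_nonneg_ae]
  · have : Function.support (fun t : ℝ => Real.exp (-t ^ 2 / 2)) = Set.univ := by
      ext t; simp [Function.mem_support, (Real.exp_pos _).ne']
    rw [this, Set.univ_inter]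
    simp [Real.volume_Ioi]
  · filter_upwards with t using le_of_lt (Real.exp_pos _)
  · exact gauss_integrable.integrableOn

lemma Gtail_anti : Antitone Gtail := by
  intro u v huv
  apply MeasureTheory.setIntegral_mono_set gauss_integrable.integrableOn
    (by filter_upwards with t using le_of_lt (Real.exp_pos _))
  exact HasSubset.Subset.eventuallyLE (Set.Ioi_subset_Ioi huv)

noncomputable def Dfun (y : ℝ) : ℝ := Real.log (Gtail y) + y ^ 2 / 2 + Real.log y

lemma Dfun_nonpos {y : ℝ} (hy : 0 < y) : Dfun y ≤ 0 := by
  have h := Gtail_upper hy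
  have h2 : Real.log (Gtail y) ≤ Real.log (Real.exp (-y ^ 2 / 2) / y) :=
    Real.log_le_log (Gtail_pos y) h
  rw [Real.log_div (Real.exp_pos _).ne' hy.ne', Real.log_exp] at h2
  unfold Dfun
  linarith

lemma Dfun_lower {y : ℝ} (hy : 0 < y) : Real.log (y ^ 2 / (y ^ 2 + 1)) ≤ Dfun y := by
  have h := Gtail_lower hy
  have h2 : Real.log (Real.exp (-y ^ 2 / 2) * (y / (y ^ 2 + 1))) ≤ Real.log (Gtail y) := by
    apply Real.log_le_log _ h
    positivity
  rw [Real.log_mul (Real.exp_pos _).ne' (by positivity), Real.log_exp,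
    Real.log_div hy.ne' (by positivity)] at h2
  have h3 : Real.log (y ^ 2 / (y ^ 2 + 1)) = Real.log (y ^ 2) - Real.log (y ^ 2 + 1) :=
    Real.log_div (by positivity) (by positivity)
  rw [h3, Real.log_pow]
  unfold Dfun
  push_cast
  linarith

lemma Dfun_tendsto : Tendsto Dfun atTop (𝓝 0) := by
  have hlow : Tendsto (fun y : ℝ => Real.log (y ^ 2 / (y ^ 2 + 1))) atTop (𝓝 0) := by
    have h1 : Tendsto (fun y : ℝ => y ^ 2 / (y ^ 2 + 1)) atTop (𝓝 1) := by
      have h2 : Tendsto (fun y : ℝ => (y ^ 2 + 1)⁻¹) atTop (𝓝 0) :=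
        Filter.Tendsto.inv_tendsto_atTop
          (tendsto_atTop_add_const_right _ 1 (tendsto_pow_atTop (by norm_num)))
      have h3 := (tendsto_const_nhds (x := (1:ℝ)) (f := atTop)).sub h2
      rw [sub_zero] at h3
      apply h3.congr'
      filter_upwards [eventually_gt_atTop (0:ℝ)] with y hy
      have : y ^ 2 + 1 ≠ 0 := by positivity
      field_simp
      ring
    have := (Real.continuousAt_log one_ne_zero).tendsto.comp h1
    simpa [Function.comp_def] using this
  apply tendsto_of_tendsto_of_tendsto_of_le_of_le' hlow tendsto_const_nhds
  · filter_upwards [eventually_gt_atTop (0:ℝ)] with y hy using Dfun_lower hy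
  · filter_upwards [eventually_gt_atTop (0:ℝ)] with y hy using Dfun_nonpos hy

lemma q_tendsto (q : ℝ → ℝ)
    (hGq : ∀ s ∈ Set.Ioo (0:ℝ) 1, Gtail (q s) = Real.sqrt (2 * Real.pi) * s) :
    Tendsto q (𝓝[>] (0:ℝ)) atTop := by
  rw [tendsto_atTop]
  intro M
  have hsq : (0:ℝ) < Real.sqrt (2 * Real.pi) := Real.sqrt_pos.2 (by positivity)
  set ε : ℝ := min 1 (Gtail M / Real.sqrt (2 * Real.pi)) with hε
  have hεpos : 0 < ε := lt_min one_pos (div_pos (Gtail_pos M) hsq)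
  filter_upwards [Ioo_mem_nhdsGT_of_mem (Set.mem_Ico.2 ⟨le_refl 0, hεpos⟩)] with s hs
  have hs1 : s ∈ Set.Ioo (0:ℝ) 1 := ⟨hs.1, lt_of_lt_of_le hs.2 (min_le_left _ _)⟩
  have hG := hGq s hs1
  have hlt : Gtail (q s) < Gtail M := by
    rw [hG]
    have h2 : s < Gtail M / Real.sqrt (2 * Real.pi) := lt_of_lt_of_le hs.2 (min_le_right _ _)
    rw [lt_div_iff₀ hsq] at h2
    linarith [h2]
  by_contra hcon
  push_neg at hcon
  exact absurd (Gtail_anti (le_of_lt hcon)) (not_le.2 hlt)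

lemma L_tendsto_atTop : Tendsto (fun s : ℝ => Real.log (1/s)) (𝓝[>] (0:ℝ)) atTop := by
  have h := tendsto_neg_atBot_atTop.comp Real.tendsto_log_nhdsGT_zero
  apply h.congr
  intro s
  simp [one_div, Real.log_inv]

lemma quantile_sq_ident (q : ℝ → ℝ)
    (hGq : ∀ s ∈ Set.Ioo (0:ℝ) 1, Gtail (q s) = Real.sqrt (2 * Real.pi) * s) :
    ∀ᶠ s in 𝓝[>] (0:ℝ), (q s) ^ 2 = 2 * Real.log (1/s) - 2 * Real.log (Real.sqrt (2 * Real.pi))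
      - 2 * Real.log (q s) + 2 * Dfun (q s) := by
  have hsq : (0:ℝ) < Real.sqrt (2 * Real.pi) := Real.sqrt_pos.2 (by positivity)
  filter_upwards [Ioo_mem_nhdsGT_of_mem (Set.mem_Ico.2 ⟨le_refl (0:ℝ), one_pos⟩)] with s hs
  have hG := hGq s hs
  have hD : Dfun (q s) = Real.log (Real.sqrt (2 * Real.pi)) + Real.log s
      + (q s) ^ 2 / 2 + Real.log (q s) := by
    unfold Dfun
    rw [hG, Real.log_mul hsq.ne' hs.1.ne']
  rw [one_div, Real.log_inv]
  linarith

lemma quantile_logq (q : ℝ → ℝ)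
    (hGq : ∀ s ∈ Set.Ioo (0:ℝ) 1, Gtail (q s) = Real.sqrt (2 * Real.pi) * s) :
    Tendsto (fun s => Real.log (q s) / Real.log (1/s)) (𝓝[>] (0:ℝ)) (𝓝 0) := by
  have hqt := q_tendsto q hGq
  have hid := quantile_sq_ident q hGq
  have hc : 0 ≤ Real.log (Real.sqrt (2 * Real.pi)) := by
    apply Real.log_nonneg
    rw [show (1:ℝ) = Real.sqrt 1 by simp]
    exact Real.sqrt_le_sqrt (by nlinarith [Real.pi_gt_three])
  -- eventually  0 ≤ log (q s) and (q s)^2 ≤ 2 * log(1/s)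
  have hbound : ∀ᶠ s in 𝓝[>] (0:ℝ),
      0 ≤ Real.log (q s) ∧ Real.log (q s) ≤ Real.log (2 * Real.log (1/s)) / 2 := by
    filter_upwards [hid, hqt.eventually (eventually_ge_atTop (1:ℝ)),
      L_tendsto_atTop.eventually (eventually_gt_atTop (0:ℝ))] with s hs h1 hL
    have hq0 : (0:ℝ) < q s := lt_of_lt_of_le one_pos h1
    have hlogq : 0 ≤ Real.log (q s) := Real.log_nonneg h1
    refine ⟨hlogq, ?_⟩
    have hD : Dfun (q s) ≤ 0 := Dfun_nonpos hq0
    have hsq_le : (q s) ^ 2 ≤ 2 * Real.log (1/s) := by linarith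
    have h2 : Real.log ((q s) ^ 2) ≤ Real.log (2 * Real.log (1/s)) :=
      Real.log_le_log (by positivity) hsq_le
    rw [Real.log_pow] at h2
    push_cast at h2
    linarith
  have hupper : Tendsto (fun s => Real.log (2 * Real.log (1/s)) / (2 * Real.log (1/s)))
      (𝓝[>] (0:ℝ)) (𝓝 0) := by
    have h0 : Tendsto (fun u : ℝ => Real.log u / u) atTop (𝓝 0) :=
      Real.isLittleO_log_id_atTop.tendsto_div_nhds_zero
    exact h0.comp (L_tendsto_atTop.const_mul_atTop two_pos)
  apply tendsto_of_tendsto_of_tendsto_of_le_of_le' tendsto_const_nhds hupper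
  · filter_upwards [hbound, L_tendsto_atTop.eventually (eventually_gt_atTop (0:ℝ))] with s hs hL
    exact div_nonneg hs.1 hL.le
  · filter_upwards [hbound, L_tendsto_atTop.eventually (eventually_gt_atTop (0:ℝ))] with s hs hL
    rw [div_le_div_iff₀ hL (by positivity)]
    calc Real.log (q s) * (2 * Real.log (1/s))
        ≤ (Real.log (2 * Real.log (1/s)) / 2) * (2 * Real.log (1/s)) := by
          apply mul_le_mul_of_nonneg_right hs.2 (by positivity)
      _ = Real.log (2 * Real.log (1/s)) * Real.log (1/s) := by ring

lemma quantile_sq_ratio (q : ℝ → ℝ)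
    (hGq : ∀ s ∈ Set.Ioo (0:ℝ) 1, Gtail (q s) = Real.sqrt (2 * Real.pi) * s) :
    Tendsto (fun s => (q s) ^ 2 / (2 * Real.log (1/s))) (𝓝[>] (0:ℝ)) (𝓝 1) := by
  have hid := quantile_sq_ident q hGq
  have hD : Tendsto (fun s => Dfun (q s)) (𝓝[>] (0:ℝ)) (𝓝 0) :=
    Dfun_tendsto.comp (q_tendsto q hGq)
  have hinv : Tendsto (fun s : ℝ => (Real.log (1/s))⁻¹) (𝓝[>] (0:ℝ)) (𝓝 0) :=
    L_tendsto_atTop.inv_tendsto_atTop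
  have hlogq := quantile_logq q hGq
  have hmain : Tendsto (fun s => 1 - Real.log (Real.sqrt (2 * Real.pi)) * (Real.log (1/s))⁻¹
      - Real.log (q s) / Real.log (1/s) + Dfun (q s) * (Real.log (1/s))⁻¹)
      (𝓝[>] (0:ℝ)) (𝓝 1) := by
    have h := (((tendsto_const_nhds (x := (1:ℝ)) (f := 𝓝[>] (0:ℝ))).sub
      ((tendsto_const_nhds (x := Real.log (Real.sqrt (2 * Real.pi)))
        (f := 𝓝[>] (0:ℝ))).mul hinv)).sub hlogq).add (hD.mul hinv)
    simpa using h
  apply hmain.congr'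
  filter_upwards [hid, L_tendsto_atTop.eventually (eventually_gt_atTop (0:ℝ))] with s hs hL
  rw [hs]
  field_simp

/-- First-order Gumbel-domain condition for the standard normal quantile function. -/
theorem normal_first_order
    (Φ : ℝ → ℝ)
    (hΦ : ∀ y : ℝ, Φ y = (2 * Real.pi) ^ (-(1/2) : ℝ) * ∫ t in Set.Iic y, Real.exp (-t ^ 2 / 2))
    (q : ℝ → ℝ)
    (hq : ∀ s ∈ Set.Ioo (0:ℝ) 1, Φ (q s) = 1 - s)
    (x : ℝ) (hx : 0 < x) :
    Tendsto (fun s => (2 * Real.log (1 / s)) ^ ((1:ℝ)/2) * (q s - q (x * s)))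
      (𝓝[>] 0) (𝓝 (Real.log x)) := by
  have hsq : (0:ℝ) < Real.sqrt (2 * Real.pi) := Real.sqrt_pos.2 (by positivity)
  have hc : ((2 * Real.pi) ^ (-(1/2) : ℝ)) * Real.sqrt (2 * Real.pi) = 1 := by
    rw [Real.sqrt_eq_rpow, ← Real.rpow_add (by positivity)]
    norm_num
  have hGq : ∀ s ∈ Set.Ioo (0:ℝ) 1, Gtail (q s) = Real.sqrt (2 * Real.pi) * s := by
    intro s hs
    have h1 := hq s hs
    rw [hΦ (q s)] at h1
    have h2 := Gtail_eq (q s)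
    have h3 : (∫ t in Set.Iic (q s), Real.exp (-t ^ 2 / 2))
        = Real.sqrt (2 * Real.pi) - Gtail (q s) := by linarith
    rw [h3, mul_sub, hc] at h1
    have h4 : ((2 * Real.pi) ^ (-(1/2) : ℝ)) * Gtail (q s) = s := by linarith
    have h5 : ((2 * Real.pi) ^ (-(1/2) : ℝ)) = (Real.sqrt (2 * Real.pi))⁻¹ :=
      eq_inv_of_mul_eq_one_left hc
    rw [h5, inv_mul_eq_div, div_eq_iff hsq.ne'] at h4
    rw [h4]
    ring
  have hmul : Tendsto (fun s : ℝ => x * s) (𝓝[>] (0:ℝ)) (𝓝[>] (0:ℝ)) := by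
    have h1 : Tendsto (fun s : ℝ => x * s) (𝓝 0) (𝓝 0) := by
      simpa [Pi.mul_def] using ((continuous_const : Continuous fun _ : ℝ => x).mul continuous_id).tendsto (0:ℝ)
    apply tendsto_nhdsWithin_of_tendsto_nhds_of_eventually_within _
      (h1.mono_left nhdsWithin_le_nhds)
    filter_upwards [self_mem_nhdsWithin] with s hs using mul_pos hx hs
  have hqa := q_tendsto q hGq
  have hqb : Tendsto (fun s => q (x * s)) (𝓝[>] (0:ℝ)) atTop := hqa.comp hmul
  have hinv : Tendsto (fun s : ℝ => (Real.log (1/s))⁻¹) (𝓝[>] (0:ℝ)) (𝓝 0) :=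
    L_tendsto_atTop.inv_tendsto_atTop
  have hLpos : ∀ᶠ s in 𝓝[>] (0:ℝ), 0 < Real.log (1/s) :=
    L_tendsto_atTop.eventually (eventually_gt_atTop (0:ℝ))
  have hspos : ∀ᶠ s in 𝓝[>] (0:ℝ), 0 < s := self_mem_nhdsWithin
  -- log (1/(x*s)) = log (1/s) - log x eventually
  have hlogxs : ∀ᶠ s in 𝓝[>] (0:ℝ),
      Real.log (1/(x*s)) = Real.log (1/s) - Real.log x := by
    filter_upwards [hspos] with s hs
    rw [one_div, one_div, mul_inv, Real.log_mul (by positivity) (by positivity),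
      Real.log_inv]
    ring
  have hratio : Tendsto (fun s => Real.log (1/(x*s)) / Real.log (1/s))
      (𝓝[>] (0:ℝ)) (𝓝 1) := by
    have hmain : Tendsto (fun s => 1 - Real.log x * (Real.log (1/s))⁻¹)
        (𝓝[>] (0:ℝ)) (𝓝 1) := by
      have h := (tendsto_const_nhds (x := (1:ℝ)) (f := 𝓝[>] (0:ℝ))).sub
        ((tendsto_const_nhds (x := Real.log x) (f := 𝓝[>] (0:ℝ))).mul hinv)
      simpa using h
    apply hmain.congr'
    filter_upwards [hlogxs, hLpos] with s hs hL
    rw [hs, sub_div, div_self hL.ne']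
    ring
  have hA := quantile_sq_ratio q hGq
  have hBcomp : Tendsto (fun s => (q (x*s)) ^ 2 / (2 * Real.log (1/(x*s))))
      (𝓝[>] (0:ℝ)) (𝓝 1) := hA.comp hmul
  have hB : Tendsto (fun s => (q (x*s)) ^ 2 / (2 * Real.log (1/s))) (𝓝[>] (0:ℝ)) (𝓝 1) := by
    have h := hBcomp.mul hratio
    rw [mul_one] at h
    apply h.congr'
    filter_upwards [hmul.eventually hLpos, hLpos] with s hL' hL
    field_simp
  -- ratio of squares tends to 1
  have hbpos : ∀ᶠ s in 𝓝[>] (0:ℝ), 1 ≤ q (x*s) := hqb.eventually (eventually_ge_atTop 1)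
  have hapos : ∀ᶠ s in 𝓝[>] (0:ℝ), 1 ≤ q s := hqa.eventually (eventually_ge_atTop 1)
  have hABratio : Tendsto (fun s => (q s) ^ 2 / (q (x*s)) ^ 2) (𝓝[>] (0:ℝ)) (𝓝 1) := by
    have h := hA.div hB one_ne_zero
    rw [div_one] at h
    apply h.congr'
    filter_upwards [hLpos, hbpos] with s hL hb
    have hb0 : (0:ℝ) < q (x*s) := lt_of_lt_of_le one_pos hb
    simp only [Pi.div_apply]
    have h2L : 2 * Real.log (1/s) ≠ 0 := by positivity
    have hbne : q (x*s) ^ 2 ≠ 0 := by positivity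
    field_simp
  have hlogAB : Tendsto (fun s => Real.log ((q s) ^ 2 / (q (x*s)) ^ 2))
      (𝓝[>] (0:ℝ)) (𝓝 0) := by
    have h := (Real.continuousAt_log one_ne_zero).tendsto.comp hABratio
    simpa [Real.log_one, Function.comp_def] using h
  have hDa : Tendsto (fun s => Dfun (q s)) (𝓝[>] (0:ℝ)) (𝓝 0) := Dfun_tendsto.comp hqa
  have hDb : Tendsto (fun s => Dfun (q (x*s))) (𝓝[>] (0:ℝ)) (𝓝 0) := Dfun_tendsto.comp hqb
  have hdiff : Tendsto (fun s => (q s) ^ 2 - (q (x*s)) ^ 2)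
      (𝓝[>] (0:ℝ)) (𝓝 (2 * Real.log x)) := by
    have hmain : Tendsto (fun s => 2 * Real.log x - Real.log ((q s) ^ 2 / (q (x*s)) ^ 2)
        + 2 * (Dfun (q s) - Dfun (q (x*s)))) (𝓝[>] (0:ℝ)) (𝓝 (2 * Real.log x)) := by
      have h := ((tendsto_const_nhds (x := 2 * Real.log x) (f := 𝓝[>] (0:ℝ))).sub
        hlogAB).add (((hDa.sub hDb)).const_mul 2)
      simpa using h
    apply hmain.congr'
    filter_upwards [quantile_sq_ident q hGq, hmul.eventually (quantile_sq_ident q hGq),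
      hlogxs, hapos, hbpos] with s hidA hidB hlx ha hb
    have ha0 : (0:ℝ) < q s := lt_of_lt_of_le one_pos ha
    have hb0 : (0:ℝ) < q (x*s) := lt_of_lt_of_le one_pos hb
    have hlog2 : Real.log ((q s) ^ 2 / (q (x*s)) ^ 2)
        = 2 * Real.log (q s) - 2 * Real.log (q (x*s)) := by
      rw [Real.log_div (by positivity) (by positivity), Real.log_pow, Real.log_pow]
      push_cast
      ring
    rw [hlog2]
    rw [hlx] at hidB
    linarith
  -- √(2 L)/(a+b) → 1/2
  have hsqa : Tendsto (fun s => q s / Real.sqrt (2 * Real.log (1/s))) (𝓝[>] (0:ℝ)) (𝓝 1) := by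
    have h := (Real.continuous_sqrt.tendsto 1).comp hA
    rw [Real.sqrt_one] at h
    apply h.congr'
    filter_upwards [hLpos, hapos] with s hL ha
    have ha0 : (0:ℝ) < q s := lt_of_lt_of_le one_pos ha
    simp only [Function.comp]
    rw [Real.sqrt_div (sq_nonneg _), Real.sqrt_sq ha0.le]
  have hsqb : Tendsto (fun s => q (x*s) / Real.sqrt (2 * Real.log (1/s)))
      (𝓝[>] (0:ℝ)) (𝓝 1) := by
    have h := (Real.continuous_sqrt.tendsto 1).comp hB
    rw [Real.sqrt_one] at h
    apply h.congr'
    filter_upwards [hLpos, hbpos] with s hL hb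
    have hb0 : (0:ℝ) < q (x*s) := lt_of_lt_of_le one_pos hb
    simp only [Function.comp]
    rw [Real.sqrt_div (sq_nonneg _), Real.sqrt_sq hb0.le]
  have hsum : Tendsto (fun s => (q s + q (x*s)) / Real.sqrt (2 * Real.log (1/s)))
      (𝓝[>] (0:ℝ)) (𝓝 2) := by
    have h := hsqa.add hsqb
    rw [show (1:ℝ) + 1 = 2 by norm_num] at h
    apply h.congr'
    filter_upwards with s
    rw [add_div]
  have hsuminv : Tendsto (fun s => Real.sqrt (2 * Real.log (1/s)) / (q s + q (x*s)))
      (𝓝[>] (0:ℝ)) (𝓝 (1/2)) := by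
    have h := hsum.inv₀ two_ne_zero
    rw [show (2:ℝ)⁻¹ = 1/2 by norm_num] at h
    apply h.congr'
    filter_upwards with s
    rw [inv_div]
  have hfinal := hdiff.mul hsuminv
  rw [show 2 * Real.log x * (1/2) = Real.log x by ring] at hfinal
  apply hfinal.congr'
  filter_upwards [hLpos, hapos, hbpos] with s hL ha hb
  have ha0 : (0:ℝ) < q s := lt_of_lt_of_le one_pos ha
  have hb0 : (0:ℝ) < q (x*s) := lt_of_lt_of_le one_pos hb
  have hab : (0:ℝ) < q s + q (x*s) := by linarith
  rw [← Real.sqrt_eq_rpow]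
  field_simp
  ring
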